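/- Let f : (ZMod 2)^n → ℝ be a Boolean function (f(x) ∈ {−1,1} for all x) computed by a parity decision tree of depth at most k with m leaves. Then spar(f) ≤ m·2^k (and in particular spar(f) ≤ 4^k), and ‖f̂‖₁ ≤ m (and in particular ‖f̂‖₁ ≤ 2^k). -/

import Mathlib

/-- The character `χ_α(x) = (-1)^{⟨α,x⟩}` on the Boolean cube `(ZMod 2)^n`. -/
noncomputable def chi {n : ℕ} (α x : Fin n → ZMod 2) : ℝ :=
  if (∑ i, α i * x i : ZMod 2) = 0 then 1 else -1

/-- The Fourier coefficient `f̂(α) = 2^{-n} ∑_x f(x) χ_α(x)`. -/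
noncomputable def fhat {n : ℕ} (f : (Fin n → ZMod 2) → ℝ) (α : Fin n → ZMod 2) : ℝ :=
  (2 ^ n : ℝ)⁻¹ * ∑ x : Fin n → ZMod 2, f x * chi α x

/-- Parity decision trees over `(ZMod 2)^n`: internal nodes are labeled by linear
functions `α`, leaves by `±1` (encoded by a `Bool`). -/
inductive PDT (n : ℕ) : Type where
  | leaf (b : Bool) : PDT n
  | node (α : Fin n → ZMod 2) (t₀ t₁ : PDT n) : PDT n

namespace PDT

/-- Evaluation of a parity decision tree on an input `x`: at a node labeled `α`
we go left if `⟨α,x⟩ = 0` and right if `⟨α,x⟩ = 1`; a leaf labeled `b` outputs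
`1` or `-1`. -/
noncomputable def eval {n : ℕ} : PDT n → (Fin n → ZMod 2) → ℝ
  | leaf b, _ => if b then 1 else -1
  | node α t₀ t₁, x => if (∑ i, α i * x i : ZMod 2) = 0 then t₀.eval x else t₁.eval x

/-- The size of a parity decision tree = its number of leaves. -/
def size {n : ℕ} : PDT n → ℕ
  | leaf _ => 1
  | node _ t₀ t₁ => t₀.size + t₁.size

/-- The depth of a parity decision tree = maximal number of internal nodes on a
root-to-leaf path. -/
def depth {n : ℕ} : PDT n → ℕ
  | leaf _ => 0
  | node _ t₀ t₁ => max t₀.depth t₁.depth + 1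

end PDT

lemma zmod2_cases (a : ZMod 2) : a = 0 ∨ a = 1 := by revert a; decide

lemma chi_mul {n : ℕ} (α β x : Fin n → ZMod 2) : chi α x * chi β x = chi (α + β) x := by
  unfold chi
  have hsum : (∑ i, (α + β) i * x i : ZMod 2) = (∑ i, α i * x i) + ∑ i, β i * x i := by
    rw [← Finset.sum_add_distrib]
    exact Finset.sum_congr rfl fun i _ => by simp [add_mul]
  rw [hsum]
  rcases zmod2_cases (∑ i, α i * x i) with h | h <;>
    rcases zmod2_cases (∑ i, β i * x i) with h' | h' <;>
      simp [h, h'] <;> exact fun hne => absurd (by decide : (1 + 1 : ZMod 2) = 0) hne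

lemma sum_chi_eq_zero {n : ℕ} {β : Fin n → ZMod 2} (hβ : β ≠ 0) :
    ∑ x : Fin n → ZMod 2, chi β x = 0 := by
  obtain ⟨i, hi⟩ : ∃ i, β i ≠ 0 := by
    by_contra h; push_neg at h; exact hβ (funext fun i => h i)
  have hβi : β i = 1 := by
    rcases zmod2_cases (β i) with h | h
    · exact absurd h hi
    · exact h
  set e : Fin n → ZMod 2 := fun j => if j = i then 1 else 0 with he
  have key : ∀ x, chi β (x + e) = - chi β x := by
    intro x
    have h1 : (∑ j, β j * (x + e) j : ZMod 2) = (∑ j, β j * x j) + 1 := by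
      have h2 : ∀ j, β j * (x + e) j = β j * x j + β j * e j := fun j => by
        simp [Pi.add_apply, mul_add]
      rw [Finset.sum_congr rfl fun j _ => h2 j, Finset.sum_add_distrib]
      congr 1
      have h3 : (∑ j, β j * e j : ZMod 2) = β i := by
        simp [he, mul_ite, Finset.sum_ite_eq']
      rw [h3, hβi]
    unfold chi
    rw [h1]
    rcases zmod2_cases (∑ j, β j * x j) with h | h <;> rw [h] <;> norm_num <;> decide
  have h4 : ∑ x : Fin n → ZMod 2, chi β (x + e) = ∑ x : Fin n → ZMod 2, chi β x :=
    Fintype.sum_equiv (Equiv.addRight e) _ _ (fun x => rfl)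
  have h5 : ∑ x : Fin n → ZMod 2, chi β (x + e) = - ∑ x : Fin n → ZMod 2, chi β x := by
    rw [Finset.sum_congr rfl fun x _ => key x, Finset.sum_neg_distrib]
  linarith [h4, h5]

lemma fhat_const {n : ℕ} (c : ℝ) (β : Fin n → ZMod 2) :
    fhat (fun _ => c) β = if β = 0 then c else 0 := by
  unfold fhat
  by_cases hβ : β = 0
  · subst hβ
    have : ∀ x : Fin n → ZMod 2, chi 0 x = 1 := fun x => by simp [chi]
    simp only [this, mul_one, Finset.sum_const, Finset.card_univ, if_pos rfl]
    have : Fintype.card (Fin n → ZMod 2) = 2 ^ n := by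
      simp [Fintype.card_fun]
    rw [this]
    push_cast
    field_simp
    simp [nsmul_eq_mul]
  · rw [if_neg hβ]
    have : ∑ x : Fin n → ZMod 2, c * chi β x = c * ∑ x : Fin n → ZMod 2, chi β x := by
      rw [Finset.mul_sum]
    rw [this, sum_chi_eq_zero hβ]
    ring

lemma fhat_node_formula {n : ℕ} (α : Fin n → ZMod 2) (g h : (Fin n → ZMod 2) → ℝ)
    (β : Fin n → ZMod 2) :
    fhat (fun x => if (∑ i, α i * x i : ZMod 2) = 0 then g x else h x) β
      = (fhat g β + fhat g (α + β) + fhat h β - fhat h (α + β)) / 2 := by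
  unfold fhat
  have key : ∀ x, (if (∑ i, α i * x i : ZMod 2) = 0 then g x else h x) * chi β x
      = (g x * chi β x + g x * chi (α + β) x + h x * chi β x - h x * chi (α + β) x) / 2 := by
    intro x
    rw [← chi_mul]
    by_cases hc : (∑ i, α i * x i : ZMod 2) = 0
    · rw [if_pos hc]
      have hα : chi α x = 1 := if_pos hc
      rw [hα]; ring
    · rw [if_neg hc]
      have hα : chi α x = -1 := if_neg hc
      rw [hα]; ring
  rw [Finset.sum_congr rfl fun x _ => key x]
  rw [← Finset.sum_div]
  simp only [Finset.sum_add_distrib, Finset.sum_sub_distrib]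
  ring

lemma sum_shift {n : ℕ} (α : Fin n → ZMod 2) (F : (Fin n → ZMod 2) → ℝ) :
    ∑ β : Fin n → ZMod 2, F (α + β) = ∑ β : Fin n → ZMod 2, F β :=
  Fintype.sum_equiv (Equiv.addLeft α) _ _ (fun _ => rfl)

lemma abs_quarter (a b c d : ℝ) : |(a + b + c - d) / 2| ≤ (|a| + |b| + |c| + |d|) / 2 := by
  rw [abs_div, abs_two]
  gcongr
  calc |a + b + c - d| ≤ |a + b + c| + |d| := abs_sub _ _
    _ ≤ |a + b| + |c| + |d| := by gcongr; exact abs_add_le _ _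
    _ ≤ |a| + |b| + |c| + |d| := by gcongr; exact abs_add_le _ _

lemma size_le_pow_depth {n : ℕ} (t : PDT n) : t.size ≤ 2 ^ t.depth := by
  induction t with
  | leaf b => simp [PDT.size, PDT.depth]
  | node α t₀ t₁ ih₀ ih₁ =>
    have h0 : (2:ℕ) ^ t₀.depth ≤ 2 ^ max t₀.depth t₁.depth :=
      Nat.pow_le_pow_right (by norm_num) (le_max_left _ _)
    have h1 : (2:ℕ) ^ t₁.depth ≤ 2 ^ max t₀.depth t₁.depth :=
      Nat.pow_le_pow_right (by norm_num) (le_max_right _ _)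
    simp only [PDT.size, PDT.depth, pow_succ]
    omega

lemma pdt_main {n : ℕ} (t : PDT n) :
    ∃ S : Finset (Fin n → ZMod 2),
      (∀ β, β ∉ S → fhat t.eval β = 0) ∧
      S.card ≤ t.size * 2 ^ t.depth ∧
      (∑ β : Fin n → ZMod 2, |fhat t.eval β|) ≤ (t.size : ℝ) := by
  classical
  induction t with
  | leaf b =>
    have heq : (PDT.leaf b : PDT n).eval = fun _ => (if b then (1:ℝ) else -1) := by
      funext x; rfl
    refine ⟨{0}, ?_, ?_, ?_⟩
    · intro β hβ
      rw [heq, fhat_const, if_neg (by simpa using hβ)]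
    · simp [PDT.size, PDT.depth]
    · rw [heq]
      have : ∀ β : Fin n → ZMod 2, |fhat (fun _ => (if b then (1:ℝ) else -1)) β|
          = if β = 0 then 1 else 0 := by
        intro β
        rw [fhat_const]
        by_cases hβ : β = 0 <;> simp [hβ] <;> cases b <;> norm_num
      rw [Finset.sum_congr rfl fun β _ => this β]
      rw [Finset.sum_ite_eq' Finset.univ (0 : Fin n → ZMod 2) (fun _ => (1:ℝ))]
      simp [PDT.size]
  | node α t₀ t₁ ih₀ ih₁ =>
    obtain ⟨S₀, hs₀, hc₀, hl₀⟩ := ih₀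
    obtain ⟨S₁, hs₁, hc₁, hl₁⟩ := ih₁
    have heq : (PDT.node α t₀ t₁ : PDT n).eval
        = fun x => if (∑ i, α i * x i : ZMod 2) = 0 then t₀.eval x else t₁.eval x := by
      funext x; rfl
    have hform : ∀ β, fhat (PDT.node α t₀ t₁ : PDT n).eval β
        = (fhat t₀.eval β + fhat t₀.eval (α + β) + fhat t₁.eval β - fhat t₁.eval (α + β)) / 2 := by
      intro β; rw [heq]; exact fhat_node_formula α _ _ β
    refine ⟨(S₀ ∪ S₀.image (α + ·)) ∪ (S₁ ∪ S₁.image (α + ·)), ?_, ?_, ?_⟩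
    · intro β hβ
      simp only [Finset.mem_union, Finset.mem_image, not_or, not_exists, not_and] at hβ
      obtain ⟨⟨hb0, hb0'⟩, hb1, hb1'⟩ := hβ
      have h0 : α + β ∉ S₀ := fun hmem => hb0' (α + β) hmem (by
        simp [← add_assoc, show α + α = 0 from by ext i; simp [CharTwo.add_self_eq_zero]])
      have h1 : α + β ∉ S₁ := fun hmem => hb1' (α + β) hmem (by
        simp [← add_assoc, show α + α = 0 from by ext i; simp [CharTwo.add_self_eq_zero]])
      rw [hform, hs₀ _ hb0, hs₀ _ h0, hs₁ _ hb1, hs₁ _ h1]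
      norm_num
    · have hcard : ((S₀ ∪ S₀.image (α + ·)) ∪ (S₁ ∪ S₁.image (α + ·))).card
          ≤ 2 * S₀.card + 2 * S₁.card := by
        calc ((S₀ ∪ S₀.image (α + ·)) ∪ (S₁ ∪ S₁.image (α + ·))).card
            ≤ (S₀ ∪ S₀.image (α + ·)).card + (S₁ ∪ S₁.image (α + ·)).card :=
              Finset.card_union_le _ _
          _ ≤ (S₀.card + (S₀.image (α + ·)).card) + (S₁.card + (S₁.image (α + ·)).card) := by
              gcongr <;> exact Finset.card_union_le _ _
          _ ≤ 2 * S₀.card + 2 * S₁.card := by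
              have := Finset.card_image_le (s := S₀) (f := (α + ·))
              have := Finset.card_image_le (s := S₁) (f := (α + ·))
              omega
      have h0 : (2:ℕ) ^ t₀.depth ≤ 2 ^ max t₀.depth t₁.depth :=
        Nat.pow_le_pow_right (by norm_num) (le_max_left _ _)
      have h1 : (2:ℕ) ^ t₁.depth ≤ 2 ^ max t₀.depth t₁.depth :=
        Nat.pow_le_pow_right (by norm_num) (le_max_right _ _)
      simp only [PDT.size, PDT.depth, pow_succ]
      have e0 : S₀.card ≤ t₀.size * 2 ^ max t₀.depth t₁.depth :=
        hc₀.trans (Nat.mul_le_mul_left _ h0)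
      have e1 : S₁.card ≤ t₁.size * 2 ^ max t₀.depth t₁.depth :=
        hc₁.trans (Nat.mul_le_mul_left _ h1)
      calc ((S₀ ∪ S₀.image (α + ·)) ∪ (S₁ ∪ S₁.image (α + ·))).card
          ≤ 2 * S₀.card + 2 * S₁.card := hcard
        _ ≤ 2 * (t₀.size * 2 ^ max t₀.depth t₁.depth) + 2 * (t₁.size * 2 ^ max t₀.depth t₁.depth) := by
            omega
        _ = (t₀.size + t₁.size) * (2 ^ max t₀.depth t₁.depth * 2) := by ring
    · calc (∑ β : Fin n → ZMod 2, |fhat (PDT.node α t₀ t₁ : PDT n).eval β|)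
          ≤ ∑ β : Fin n → ZMod 2,
              (|fhat t₀.eval β| + |fhat t₀.eval (α + β)| + |fhat t₁.eval β|
                + |fhat t₁.eval (α + β)|) / 2 := by
            refine Finset.sum_le_sum fun β _ => ?_
            rw [hform]
            exact abs_quarter _ _ _ _
        _ = ((∑ β : Fin n → ZMod 2, |fhat t₀.eval β|) + (∑ β : Fin n → ZMod 2, |fhat t₀.eval (α + β)|)
              + (∑ β : Fin n → ZMod 2, |fhat t₁.eval β|)
              + (∑ β : Fin n → ZMod 2, |fhat t₁.eval (α + β)|)) / 2 := by
            rw [← Finset.sum_div]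
            simp [Finset.sum_add_distrib]
        _ = (∑ β : Fin n → ZMod 2, |fhat t₀.eval β|) + (∑ β : Fin n → ZMod 2, |fhat t₁.eval β|) := by
            rw [sum_shift α (fun β => |fhat t₀.eval β|), sum_shift α (fun β => |fhat t₁.eval β|)]
            ring
        _ ≤ (t₀.size : ℝ) + (t₁.size : ℝ) := by gcongr
        _ = ((PDT.node α t₀ t₁ : PDT n).size : ℝ) := by simp [PDT.size]


/-- **Lemma 2.5**: if a Boolean function `f` is computed by a parity decision tree
of depth at most `k` with `m` leaves, then `spar(f) ≤ m·2^k ≤ 4^k` and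
`‖f̂‖₁ ≤ m ≤ 2^k`. -/
theorem pdt_sparsity_and_norm_bounds {n : ℕ}
    (f : (Fin n → ZMod 2) → ℝ) (hf : ∀ x, f x = 1 ∨ f x = -1)
    (T : PDT n) (hT : ∀ x, T.eval x = f x)
    (k m : ℕ) (hdepth : T.depth ≤ k) (hsize : T.size = m) :
    Nat.card {α : Fin n → ZMod 2 // fhat f α ≠ 0} ≤ m * 2 ^ k ∧
    Nat.card {α : Fin n → ZMod 2 // fhat f α ≠ 0} ≤ 4 ^ k ∧
    (∑ α : Fin n → ZMod 2, |fhat f α|) ≤ (m : ℝ) ∧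
    (∑ α : Fin n → ZMod 2, |fhat f α|) ≤ (2 : ℝ) ^ k := by
  classical
  have hfe : T.eval = f := funext hT
  subst hfe
  obtain ⟨S, hsupp, hcard, hl1⟩ := pdt_main T
  have hm : m ≤ 2 ^ k := by
    rw [← hsize]
    exact (size_le_pow_depth T).trans (Nat.pow_le_pow_right (by norm_num) hdepth)
  have hsub : {α : Fin n → ZMod 2 | fhat T.eval α ≠ 0} ⊆ ↑S := by
    intro β hβ
    by_contra h
    exact hβ (hsupp β (by simpa using h))
  have hspar : Nat.card {α : Fin n → ZMod 2 // fhat T.eval α ≠ 0} ≤ S.card := by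
    calc Nat.card {α : Fin n → ZMod 2 // fhat T.eval α ≠ 0}
        = Set.ncard {α : Fin n → ZMod 2 | fhat T.eval α ≠ 0} :=
          Nat.card_coe_set_eq _
      _ ≤ Set.ncard (↑S : Set (Fin n → ZMod 2)) := Set.ncard_le_ncard hsub S.finite_toSet
      _ = S.card := Set.ncard_coe_finset S
  have hspar2 : Nat.card {α : Fin n → ZMod 2 // fhat T.eval α ≠ 0} ≤ m * 2 ^ k := by
    refine hspar.trans (hcard.trans ?_)
    rw [hsize]
    exact Nat.mul_le_mul_left m (Nat.pow_le_pow_right (by norm_num) hdepth)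
  refine ⟨hspar2, hspar2.trans ?_, ?_, ?_⟩
  · calc m * 2 ^ k ≤ 2 ^ k * 2 ^ k := Nat.mul_le_mul_right _ hm
      _ = 4 ^ k := by rw [← mul_pow]; norm_num
  · rw [← hsize]; exact hl1
  · refine (hl1.trans ?_)
    rw [hsize]
    calc (m : ℝ) ≤ ((2 ^ k : ℕ) : ℝ) := Nat.cast_le.mpr hm
      _ = (2 : ℝ) ^ k := by push_cast; ring
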